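/- Let G be a group acting on a tree T with infinite cyclic edge and vertex stabilizers, let f: G → G' be a group homomorphism, and suppose a ∈ G fixes a vertex of T. If G' also acts on a tree T' with cyclic stabilizers and f(a) acts hyperbolically on T' (fixes no point), then the image f(G) stabilizes a line in T' (namely the axis of f(a)); in particular f(G) is virtually cyclic-by-cyclic (elementary). -/

import Mathlib

open SimpleGraph

private lemma st9_dist_getVert_le {W : Type} {Γ : SimpleGraph W} (hc : Γ.Connected) :
    ∀ {u v : W} (w : Γ.Walk u v) (i j : ℕ), i ≤ j →
      Γ.dist (w.getVert i) (w.getVert j) ≤ j - i := by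
  intro u v w
  induction w with
  | nil => intro i j _; simp [Walk.getVert, SimpleGraph.dist_self]
  | @cons u b v h w ih =>
    intro i j hij
    cases i with
    | succ i =>
      cases j with
      | zero => omega
      | succ j => simpa [Walk.getVert_cons_succ] using ih i j (by omega)
    | zero =>
      cases j with
      | zero => simp
      | succ j =>
        rw [Walk.getVert_zero, Walk.getVert_cons_succ]
        have h1 : Γ.dist u b = 1 := SimpleGraph.dist_eq_one_iff_adj.mpr h
        have h2 := ih 0 j (Nat.zero_le j)
        rw [Walk.getVert_zero] at h2
        have h3 := hc.dist_triangle (u := u) (v := b) (w := w.getVert j)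
        omega

private lemma st9_dist_getVert_eq {W : Type} {Γ : SimpleGraph W} (hc : Γ.Connected)
    {u v : W} (w : Γ.Walk u v) (hw : w.length = Γ.dist u v) {i j : ℕ}
    (hij : i ≤ j) (hj : j ≤ w.length) :
    Γ.dist (w.getVert i) (w.getVert j) = j - i := by
  refine le_antisymm (st9_dist_getVert_le hc w i j hij) ?_
  have h1 : Γ.dist u (w.getVert i) ≤ i := by
    have := st9_dist_getVert_le hc w 0 i (Nat.zero_le i)
    simpa using this
  have h2 : Γ.dist (w.getVert j) v ≤ w.length - j := by
    have := st9_dist_getVert_le hc w j w.length hj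
    simpa [Walk.getVert_length] using this
  have h3 := hc.dist_triangle (u := u) (v := w.getVert i) (w := w.getVert j)
  have h4 := hc.dist_triangle (u := u) (v := w.getVert j) (w := v)
  omega

private lemma st9_reduced_isPath {W : Type} {Γ : SimpleGraph W} (hac : Γ.IsAcyclic) :
    ∀ {u v : W} (w : Γ.Walk u v),
      (∀ i, i + 2 ≤ w.length → w.getVert i ≠ w.getVert (i + 2)) → w.IsPath := by
  letI := Classical.decEq W
  intro u v w
  induction w with
  | nil => intro _; exact Walk.IsPath.nil
  | @cons u b v h w ih =>
    intro hred
    have hw : w.IsPath := by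
      refine ih (fun i hi => ?_)
      have h1 := hred (i + 1) (by simp only [Walk.length_cons]; omega)
      simpa [Walk.getVert_cons_succ] using h1
    by_cases hub : u ∈ w.support
    · exfalso
      have htp : (w.takeUntil u hub).IsPath := hw.takeUntil hub
      have hsingle : ((Walk.cons h Walk.nil) : Γ.Walk u b).IsPath := by
        simp [Walk.cons_isPath_iff, h.ne]
      have h2 : (⟨Walk.cons h Walk.nil, hsingle⟩ : Γ.Path u b)
          = ⟨(w.takeUntil u hub).reverse, htp.reverse⟩ := hac.path_unique _ _
      have h3 : (w.takeUntil u hub).reverse = Walk.cons h Walk.nil := by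
        have := congrArg Subtype.val h2
        simpa using this.symm
      have h4 : w.takeUntil u hub = (Walk.cons h Walk.nil).reverse := by
        rw [← h3, Walk.reverse_reverse]
      have hlen1 : (w.takeUntil u hub).length = 1 := by
        rw [h4]; simp
      have h5 : w.getVert 1 = u := by
        conv_lhs => rw [← w.take_spec hub]
        rw [Walk.getVert_append, hlen1]
        simp
      have hwl : 1 ≤ w.length := by
        have := w.length_takeUntil_le hub
        omega
      have h6 := hred 0 (by simp only [Walk.length_cons]; omega)
      apply h6
      show u = (Walk.cons h w).getVert 2
      rw [show (2:ℕ) = 1 + 1 from rfl, Walk.getVert_cons_succ, h5]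
    · exact hw.cons hub

private lemma st9_path_length_eq_dist {W : Type} {Γ : SimpleGraph W} (hT : Γ.IsTree)
    {u v : W} (w : Γ.Walk u v) (hw : w.IsPath) : w.length = Γ.dist u v := by
  obtain ⟨w', hw'⟩ := hT.isConnected.exists_walk_length_eq_dist u v
  have hp' : w'.IsPath := w'.isPath_of_length_eq_dist hw'
  have heq : (⟨w, hw⟩ : Γ.Path u v) = ⟨w', hp'⟩ := hT.IsAcyclic.path_unique _ _
  rw [show w = w' from congrArg Subtype.val heq, hw']

private lemma st9_chain_walk {W : Type} {Γ : SimpleGraph W} (c : ℕ → W) :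
    ∀ (L : ℕ), (∀ j, j + 1 ≤ L → Γ.Adj (c j) (c (j + 1))) →
    ∃ w : Γ.Walk (c 0) (c L), w.length = L ∧ ∀ i, i ≤ L → w.getVert i = c i := by
  intro L
  induction L with
  | zero =>
    intro _
    exact ⟨Walk.nil, rfl, by intro i hi; interval_cases i; simp⟩
  | succ L ihL =>
    intro h
    obtain ⟨w, hlen, hgv⟩ := ihL (fun j hj => h j (le_trans hj (Nat.le_succ L)))
    refine ⟨w.append (Walk.cons (h L le_rfl) Walk.nil), ?_, ?_⟩
    · simp [hlen]
    · intro i hi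
      rw [Walk.getVert_append]
      by_cases hi' : i < w.length
      · rw [if_pos hi', hgv i (by omega)]
      · rw [if_neg hi']
        have : i = L ∨ i = L + 1 := by omega
        rcases this with rfl | rfl
        · rw [hlen]; simp
        · rw [hlen]
          simp [Walk.getVert_cons_succ]

private lemma st9_chain_dist {W : Type} {Γ : SimpleGraph W} (hT : Γ.IsTree) (c : ℕ → W)
    (L : ℕ) (hadj : ∀ j, j + 1 ≤ L → Γ.Adj (c j) (c (j + 1)))
    (hred : ∀ j, j + 2 ≤ L → c j ≠ c (j + 2)) : Γ.dist (c 0) (c L) = L := by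
  obtain ⟨w, hlen, hgv⟩ := st9_chain_walk c L hadj
  have hpath : w.IsPath := by
    refine st9_reduced_isPath hT.IsAcyclic w (fun i hi => ?_)
    rw [hgv i (by omega), hgv (i + 2) (by omega)]
    exact hred i (by omega)
  have := st9_path_length_eq_dist hT w hpath
  omega

private lemma st9_dist_smul {W G' : Type} [Group G'] [MulAction G' W] {Γ : SimpleGraph W}
    (hc : Γ.Connected)
    (hact' : ∀ (g : G') (u v : W), Γ.Adj u v → Γ.Adj (g • u) (g • v))
    (g : G') (u v : W) : Γ.dist (g • u) (g • v) = Γ.dist u v := by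
  have hle : ∀ (g : G') (u v : W), Γ.dist (g • u) (g • v) ≤ Γ.dist u v := by
    intro g u v
    obtain ⟨w, hw⟩ := hc.exists_walk_length_eq_dist u v
    let φ : Γ →g Γ := ⟨fun x => g • x, fun {a b} hab => hact' g a b hab⟩
    have h1 := SimpleGraph.dist_le (w.map φ)
    rw [Walk.length_map, hw] at h1
    exact h1
  refine le_antisymm (hle g u v) ?_
  have := hle g⁻¹ (g • u) (g • v)
  simpa using this

private lemma st9_zpow_ne_one {G : Type} [Group G] (H : Subgroup G)
    (hcyc : IsCyclic H) (hinf : Infinite H) {x : G} (hx : x ∈ H) (hx1 : x ≠ 1)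
    {k : ℤ} (hk : k ≠ 0) : x ^ k ≠ 1 := by
  haveI := hcyc
  haveI := hinf
  obtain ⟨z, hz⟩ := IsCyclic.exists_generator (α := H)
  have hzord : ¬ IsOfFinOrder z := by
    intro hfin
    have h1 : (Subgroup.zpowers z : Set H).Finite := hfin.finite_zpowers
    have h2 : (Set.univ : Set H).Finite := h1.subset (fun w _ => hz w)
    exact Set.infinite_univ h2
  obtain ⟨p, hp⟩ := hz ⟨x, hx⟩
  have hp0 : p ≠ 0 := by
    rintro rfl
    apply hx1
    have := congrArg (Subtype.val) hp
    simpa using this.symm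
  intro h1
  have h2 : (⟨x, hx⟩ : H) ^ k = 1 := by
    apply Subtype.ext
    simpa [SubgroupClass.coe_zpow] using h1
  rw [← hp, ← zpow_mul] at h2
  exact hzord (isOfFinOrder_iff_zpow_eq_one.mpr ⟨p * k, mul_ne_zero hp0 hk, h2⟩)

private lemma st9_comm_pow {G : Type} [Group G] (H : Subgroup G)
    (hcyc : IsCyclic H) (hinf : Infinite H) {x y : G} (hx : x ∈ H) (hy : y ∈ H)
    (hx1 : x ≠ 1) (hy1 : y ≠ 1) :
    ∃ m n : ℤ, m ≠ 0 ∧ n ≠ 0 ∧ x ^ m = y ^ n := by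
  haveI := hcyc
  obtain ⟨z, hz⟩ := IsCyclic.exists_generator (α := H)
  obtain ⟨p, hp⟩ := hz ⟨x, hx⟩
  obtain ⟨q, hq⟩ := hz ⟨y, hy⟩
  have hp0 : p ≠ 0 := by
    rintro rfl
    apply hx1
    have := congrArg (Subtype.val) hp
    simpa using this.symm
  have hq0 : q ≠ 0 := by
    rintro rfl
    apply hy1
    have := congrArg (Subtype.val) hq
    simpa using this.symm
  refine ⟨q, p, hq0, hp0, ?_⟩
  have : ((⟨x, hx⟩ : H) ^ q : H) = (⟨y, hy⟩ : H) ^ p := by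
    rw [← hp, ← hq, ← zpow_mul, ← zpow_mul, mul_comm]
  have := congrArg (Subtype.val) this
  simpa [SubgroupClass.coe_zpow] using this
private lemma st9_axis {W : Type} {Γ : SimpleGraph W} (hT : Γ.IsTree)
    {G' : Type} [Group G'] [MulAction G' W]
    (hact' : ∀ (g : G') (u v : W), Γ.Adj u v → Γ.Adj (g • u) (g • v))
    (hnoinv : ∀ (g : G') (u v : W), Γ.Adj u v → ¬(g • u = v ∧ g • v = u))
    (α : G') (hhyp : ∀ v : W, α • v ≠ v) :
    ∃ ℓ : ℤ → W, Function.Injective ℓ ∧ (∀ i : ℤ, Γ.Adj (ℓ i) (ℓ (i + 1))) ∧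
      ∀ m : ℤ, m ≠ 0 →
        {v | ∀ w, Γ.dist v (α ^ m • v) ≤ Γ.dist w (α ^ m • w)} = Set.range ℓ := by
  have hc := hT.isConnected
  haveI : Nonempty W := hc.nonempty
  set D : W → ℕ := fun v => Γ.dist v (α • v) with hD
  set v₀ := Function.argmin D with hv₀
  have hmin : ∀ v, D v₀ ≤ D v := fun v => Function.argmin_le D v
  set d : ℕ := D v₀ with hdd
  have hd1 : 1 ≤ d := by
    rcases Nat.eq_zero_or_pos d with h0 | h
    · exfalso
      have : v₀ = α • v₀ := (hc.dist_eq_zero_iff).mp h0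
      exact hhyp v₀ this.symm
    · exact h
  obtain ⟨p, hp⟩ := hc.exists_walk_length_eq_dist v₀ (α • v₀)
  have hplen : p.length = d := hp
  have hdz : (0 : ℤ) < (d : ℤ) := by exact_mod_cast hd1
  set ℓ : ℤ → W := fun i => α ^ (i / (d : ℤ)) • p.getVert (i % (d : ℤ)).toNat with hℓ
  have hrep : ∀ (q r : ℤ), 0 ≤ r → r < d → ℓ ((d : ℤ) * q + r) = α ^ q • p.getVert r.toNat := by
    intro q r h0 h1
    have hdiv : ((d : ℤ) * q + r) / d = q := by
      rw [add_comm, Int.add_mul_ediv_left r q (by omega : (d:ℤ) ≠ 0),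
        Int.ediv_eq_zero_of_lt h0 h1, zero_add]
    have hmod : ((d : ℤ) * q + r) % d = r := by
      rw [add_comm, Int.add_mul_emod_self_left, Int.emod_eq_of_lt h0 h1]
    rw [hℓ]
    simp only [hdiv, hmod]
  have hself : ∀ i : ℤ, i = (d : ℤ) * (i / d) + i % d := fun i => (Int.mul_ediv_add_emod i d).symm
  have hr0 : ∀ i : ℤ, 0 ≤ i % (d : ℤ) := fun i => Int.emod_nonneg i (by omega)
  have hr1 : ∀ i : ℤ, i % (d : ℤ) < d := fun i => Int.emod_lt_of_pos i hdz
  have hli : ∀ i : ℤ, ℓ i = α ^ (i / (d:ℤ)) • p.getVert ((i % (d:ℤ)).toNat) := fun i => rfl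
  have hshift : ∀ (i t : ℤ), ℓ (i + (d : ℤ) * t) = α ^ t • ℓ i := by
    intro i t
    have he : i + (d : ℤ) * t = (d : ℤ) * (i / d + t) + i % d := by
      conv_lhs => rw [hself i]
      ring
    rw [he, hrep _ _ (hr0 i) (hr1 i), hli i]
    rw [show i / (d:ℤ) + t = t + i / d from by ring, zpow_add, mul_smul]
  have hadj : ∀ i : ℤ, Γ.Adj (ℓ i) (ℓ (i + 1)) := by
    intro i
    set q := i / (d : ℤ) with hq
    set r := i % (d : ℤ) with hr
    have hgv : r.toNat < p.length := by rw [hplen]; have := hr1 i; have := hr0 i; omega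
    by_cases hcase : r + 1 < d
    · have h2 : ℓ (i + 1) = α ^ q • p.getVert (r + 1).toNat := by
        rw [show i + 1 = (d : ℤ) * q + (r + 1) from by rw [hself i]; ring,
          hrep q (r + 1) (by have := hr0 i; omega) hcase]
      rw [hli i, h2, show (r + 1).toNat = r.toNat + 1 from by have := hr0 i; omega]
      exact hact' _ _ _ (p.adj_getVert_succ hgv)
    · have hr1d : r + 1 = d := by have := hr1 i; omega
      have h2 : ℓ (i + 1) = α ^ (q + 1) • p.getVert 0 := by
        rw [show i + 1 = (d : ℤ) * (q + 1) + 0 from by rw [hself i]; push_cast; linarith,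
          hrep (q + 1) 0 le_rfl hdz]
        simp
      rw [hli i, h2, Walk.getVert_zero]
      have h3 : α ^ (q + 1) • v₀ = α ^ q • p.getVert p.length := by
        rw [Walk.getVert_length, zpow_add, zpow_one, mul_smul]
      rw [h3]
      apply hact'
      have h4 := p.adj_getVert_succ (i := r.toNat) hgv
      rwa [show r.toNat + 1 = p.length from by rw [hplen]; have := hr0 i; omega] at h4
  have hadj01 : Γ.Adj v₀ (α • v₀) → True := fun _ => trivial
  have hseam : ¬ (α • p.getVert 1 = p.getVert (d - 1)) := by
    intro heq
    rcases eq_or_lt_of_le hd1 with h1 | h2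
    · -- d = 1
      have hd' : d = 1 := h1.symm
      have e1 : p.getVert 1 = α • v₀ := by
        rw [show (1:ℕ) = p.length from by omega, Walk.getVert_length]
      have e0 : p.getVert (d - 1) = v₀ := by
        rw [hd']; simpa using p.getVert_zero
      have hadj2 : Γ.Adj v₀ (α • v₀) := by
        have := p.adj_getVert_succ (i := 0) (by omega)
        rwa [Walk.getVert_zero, e1] at this
      exact hnoinv α v₀ (α • v₀) hadj2 ⟨rfl, by rw [← e1, heq, e0]⟩
    · -- d ≥ 2
      have hle := st9_dist_getVert_le hc p 1 (d - 1) (by omega)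
      have hm2 := hmin (p.getVert 1)
      rw [hD] at hm2
      simp only at hm2
      rw [heq] at hm2
      have : Γ.dist (p.getVert 1) (p.getVert (d - 1)) ≤ d - 1 - 1 := hle
      omega
  have hred : ∀ i : ℤ, ℓ i ≠ ℓ (i + 2) := by
    intro i heq
    set q := i / (d : ℤ) with hq
    set r := i % (d : ℤ) with hr
    have hb0 := hr0 i
    have hb1 := hr1 i
    by_cases hc2 : r + 2 ≤ d
    · have h2 : ℓ (i + 2) = α ^ q • p.getVert (r + 2).toNat := by
        rcases lt_or_eq_of_le hc2 with hlt | heqd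
        · rw [show i + 2 = (d : ℤ) * q + (r + 2) from by rw [hself i]; ring,
            hrep q (r + 2) (by omega) hlt]
        · rw [show i + 2 = (d : ℤ) * (q + 1) + 0 from by rw [hself i]; push_cast; linarith,
            hrep (q + 1) 0 le_rfl hdz]
          simp only [Int.toNat_zero, Walk.getVert_zero]
          rw [show α ^ (q + 1) • v₀ = α ^ q • p.getVert p.length from by
            rw [Walk.getVert_length, zpow_add, zpow_one, mul_smul]]
          rw [show p.length = (r + 2).toNat from by omega]
      rw [hli i, h2] at heq
      have h3 : p.getVert r.toNat = p.getVert (r.toNat + 2) := by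
        have := smul_left_cancel (α ^ q) heq
        rwa [show (r + 2).toNat = r.toNat + 2 from by omega] at this
      have h4 := st9_dist_getVert_eq hc p hp (i := r.toNat) (j := r.toNat + 2)
        (by omega) (by rw [hplen]; omega)
      rw [← h3] at h4
      rw [SimpleGraph.dist_self] at h4
      omega
    · have hrd : r = (d : ℤ) - 1 := by omega
      rcases eq_or_lt_of_le hd1 with hd' | hd2
      · -- d = 1, r = 0
        have hdn : d = 1 := hd'.symm
        have hrz : r = 0 := by omega
        have e1 : ℓ i = α ^ q • v₀ := by
          rw [hli i, ← hr, hrz]; simp [hq]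
        have e2 : ℓ (i + 2) = α ^ (q + 2) • v₀ := by
          rw [show i + 2 = (d : ℤ) * (q + 2) + 0 from by rw [hself i]; push_cast; linarith,
            hrep (q + 2) 0 le_rfl hdz]
          simp
        rw [e1, e2] at heq
        have h31 : v₀ = α ^ (2:ℤ) • v₀ := by
          refine smul_left_cancel (α ^ q) ?_
          rw [← mul_smul, ← zpow_add]
          exact heq
        have h3 : α • α • v₀ = v₀ := by
          rw [show (2:ℤ) = 1 + 1 from rfl, zpow_add, zpow_one, mul_smul] at h31
          exact h31.symm
        have e1p : p.getVert 1 = α • v₀ := by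
          rw [show (1:ℕ) = p.length from by omega, Walk.getVert_length]
        have hadj2 : Γ.Adj v₀ (α • v₀) := by
          have := p.adj_getVert_succ (i := 0) (by omega)
          rwa [Walk.getVert_zero, e1p] at this
        exact hnoinv α v₀ (α • v₀) hadj2 ⟨rfl, h3⟩
      · -- d ≥ 2, r = d - 1
        have h2 : ℓ (i + 2) = α ^ (q + 1) • p.getVert 1 := by
          rw [show i + 2 = (d : ℤ) * (q + 1) + 1 from by rw [hself i]; push_cast; linarith,
            hrep (q + 1) 1 (by omega) (by omega)]
          norm_num
        rw [hli i, h2] at heq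
        have h3 : p.getVert r.toNat = α • p.getVert 1 := by
          refine smul_left_cancel (α ^ q) ?_
          rw [heq, ← mul_smul, ← zpow_add_one]
        apply hseam
        rw [← h3, show r.toNat = d - 1 from by omega]
  have hgeo : ∀ (i0 : ℤ) (L : ℕ), Γ.dist (ℓ i0) (ℓ (i0 + L)) = L := by
    intro i0 L
    have hch := st9_chain_dist hT (fun j => ℓ (i0 + j)) L
      (fun j hj => by
        show Γ.Adj (ℓ (i0 + (j : ℤ))) (ℓ (i0 + ((j + 1 : ℕ) : ℤ)))
        push_cast
        rw [show i0 + ((j : ℤ) + 1) = (i0 + (j : ℤ)) + 1 from by ring]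
        exact hadj _)
      (fun j hj => by
        show (ℓ (i0 + (j : ℤ))) ≠ (ℓ (i0 + ((j + 2 : ℕ) : ℤ)))
        push_cast
        rw [show i0 + ((j : ℤ) + 2) = (i0 + (j : ℤ)) + 2 from by ring]
        exact hred _)
    simpa using hch
  have hinj : Function.Injective ℓ := by
    have haux : ∀ i j : ℤ, i < j → ℓ i ≠ ℓ j := by
      intro i j hij he
      have := hgeo i (j - i).toNat
      rw [show i + ((j - i).toNat : ℤ) = j from by omega, he, SimpleGraph.dist_self] at this
      omega
    intro i j he
    rcases lt_trichotomy i j with h | h | h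
    · exact absurd he (haux i j h)
    · exact h
    · exact absurd he.symm (haux j i h)
  have hproj : ∀ v : W, ∃ i : ℤ, ∀ t : ℤ, Γ.dist v (ℓ i) ≤ Γ.dist v (ℓ t) :=
    fun v => ⟨Function.argmin (fun t => Γ.dist v (ℓ t)),
      fun t => Function.argmin_le (fun t => Γ.dist v (ℓ t)) t⟩
  choose proj hprojmin using hproj
  have hK : ∀ (v : W) (m : ℕ), 1 ≤ m →
      Γ.dist v (α ^ (m : ℤ) • v) = m * d + 2 * Γ.dist v (ℓ (proj v)) := by
    intro v m hm
    set i := proj v with hi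
    set k := Γ.dist v (ℓ i) with hk
    obtain ⟨qw, hqw0⟩ := hc.exists_walk_length_eq_dist v (ℓ i)
    have hqw : qw.length = k := hqw0
    set c : ℕ → W := fun j => if j < k then qw.getVert j
      else if j ≤ k + m * d then ℓ (i + ((j - k : ℕ) : ℤ))
      else α ^ (m : ℤ) • qw.getVert (2 * k + m * d - j) with hcdef
    have hqpre : ∀ j, j ≤ k → Γ.dist v (qw.getVert j) = j := by
      intro j hj
      have := st9_dist_getVert_eq hc qw hqw0 (Nat.zero_le j) (by omega)
      simpa using this
    have hqA : ∀ j, j < k → ∀ t : ℤ, qw.getVert j ≠ ℓ t := by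
      intro j hj t he
      have h1 := hprojmin v t
      rw [← hi, ← hk, ← he, hqpre j (by omega)] at h1
      omega
    have hck : qw.getVert k = ℓ i := by
      rw [← hqw]; exact qw.getVert_length
    have hcq : ∀ j, j ≤ k → c j = qw.getVert j := by
      intro j hj
      by_cases h : j < k
      · simp [hcdef, h]
      · have hjk : j = k := by omega
        subst hjk
        simp only [hcdef, lt_irrefl, if_false, if_neg (lt_irrefl k),
          if_pos (by omega : k ≤ k + m * d)]
        rw [Nat.sub_self]
        simpa using hck.symm
    have hca : ∀ j, k ≤ j → j ≤ k + m * d → c j = ℓ (i + ((j - k : ℕ) : ℤ)) := by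
      intro j h1 h2
      by_cases h : j < k
      · omega
      · simp [hcdef, h, h2]
    have hcr : ∀ j, k + m * d ≤ j → j ≤ 2 * k + m * d →
        c j = α ^ (m : ℤ) • qw.getVert (2 * k + m * d - j) := by
      intro j h1 h2
      by_cases he : j = k + m * d
      · subst he
        rw [hca _ (by omega) le_rfl]
        rw [show ((k + m * d - k : ℕ) : ℤ) = (d : ℤ) * m from by push_cast [Nat.add_sub_cancel_left]; ring]
        rw [hshift i m, show 2 * k + m * d - (k + m * d) = k from by omega, hck]
      · have h3 : ¬ (j < k) := by omega
        have h4 : ¬ (j ≤ k + m * d) := by omega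
        simp [hcdef, h3, h4]
    have hmd1 : 1 ≤ m * d := Nat.one_le_iff_ne_zero.mpr (by positivity)
    have hCadj : ∀ j, j + 1 ≤ 2 * k + m * d → Γ.Adj (c j) (c (j + 1)) := by
      intro j hj
      by_cases h1 : j + 1 ≤ k
      · rw [hcq j (by omega), hcq (j + 1) h1]
        exact qw.adj_getVert_succ (by omega)
      · by_cases h2 : j + 1 ≤ k + m * d
        · rw [hca j (by omega) (by omega), hca (j + 1) (by omega) h2]
          rw [show ((j + 1 - k : ℕ) : ℤ) = ((j - k : ℕ) : ℤ) + 1 from by omega, ← add_assoc]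
          exact hadj _
        · have h3 : k + m * d ≤ j := by omega
          rw [hcr j h3 (by omega), hcr (j + 1) (by omega) (by omega)]
          have hs1 : 1 ≤ 2 * k + m * d - j := by omega
          have hs2 : 2 * k + m * d - j ≤ k := by omega
          rw [show 2 * k + m * d - (j + 1) = (2 * k + m * d - j) - 1 from by omega]
          have := qw.adj_getVert_succ (i := 2 * k + m * d - j - 1) (by omega)
          rw [show 2 * k + m * d - j - 1 + 1 = 2 * k + m * d - j from by omega] at this
          exact (hact' (α ^ (m : ℤ)) _ _ this).symm
    have hCred : ∀ j, j + 2 ≤ 2 * k + m * d → c j ≠ c (j + 2) := by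
      intro j hj he
      by_cases h1 : j + 2 ≤ k
      · rw [hcq j (by omega), hcq (j + 2) h1] at he
        have e1 := hqpre j (by omega)
        have e2 := hqpre (j + 2) h1
        rw [← he] at e2
        omega
      · by_cases h2 : j + 1 = k
        · rw [hcq j (by omega), hca (j + 2) (by omega) (by omega)] at he
          exact hqA j (by omega) _ he
        · by_cases h3 : j + 2 ≤ k + m * d
          · have hkj : k ≤ j := by omega
            rw [hca j hkj (by omega), hca (j + 2) (by omega) h3] at he
            have := hinj he
            omega
          · by_cases h4 : j + 1 = k + m * d
            · have hk1 : 1 ≤ k := by omega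
              have hkj : k ≤ j := by omega
              rw [hca j hkj (by omega), hcr (j + 2) (by omega) (by omega)] at he
              rw [show 2 * k + m * d - (j + 2) = k - 1 from by omega] at he
              have h5 : qw.getVert (k - 1) = α ^ (-(m : ℤ)) • ℓ (i + ((j - k : ℕ) : ℤ)) := by
                rw [he, zpow_neg, inv_smul_smul]
              have h6 := hshift (i + ((j - k : ℕ) : ℤ)) (-(m : ℤ))
              rw [← h6] at h5
              exact hqA (k - 1) (by omega) _ h5
            · have h5 : k + m * d ≤ j := by omega
              rw [hcr j h5 (by omega), hcr (j + 2) (by omega) (by omega)] at he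
              have h6 := smul_left_cancel (α ^ (m : ℤ)) he
              have hs2 : 2 ≤ 2 * k + m * d - j := by omega
              have e1 := hqpre (2 * k + m * d - j) (by omega)
              have e2 := hqpre (2 * k + m * d - (j + 2)) (by omega)
              rw [show 2 * k + m * d - (j + 2) = 2 * k + m * d - j - 2 from by omega] at e2
              rw [show 2 * k + m * d - (j + 2) = 2 * k + m * d - j - 2 from by omega] at h6
              rw [← h6] at e2
              omega
    have hCd := st9_chain_dist hT c (2 * k + m * d) hCadj hCred
    have hc0 : c 0 = v := by
      rw [hcq 0 (Nat.zero_le k), Walk.getVert_zero]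
    have hcL : c (2 * k + m * d) = α ^ (m : ℤ) • v := by
      rw [hcr _ (by omega) le_rfl, Nat.sub_self, Walk.getVert_zero]
    rw [hc0, hcL] at hCd
    omega
  refine ⟨ℓ, hinj, hadj, ?_⟩
  have hdsm := fun (g : G') (u v : W) => st9_dist_smul hc hact' g u v
  have hmem0 : ∀ t : ℤ, Γ.dist (ℓ t) (ℓ (proj (ℓ t))) = 0 := by
    intro t
    have h1 := hprojmin (ℓ t) t
    rw [SimpleGraph.dist_self] at h1
    omega
  have hMS : ∀ (m : ℕ), 1 ≤ m →
      {v | ∀ w, Γ.dist v (α ^ (m : ℤ) • v) ≤ Γ.dist w (α ^ (m : ℤ) • w)} = Set.range ℓ := by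
    intro m hm
    ext v
    simp only [Set.mem_setOf_eq, Set.mem_range]
    constructor
    · intro hv
      have h1 := hv (ℓ 0)
      rw [hK v m hm, hK (ℓ 0) m hm, hmem0 0] at h1
      have hkv : Γ.dist v (ℓ (proj v)) = 0 := by omega
      have h2 : v = ℓ (proj v) := (hc.dist_eq_zero_iff).mp hkv
      exact ⟨proj v, h2.symm⟩
    · rintro ⟨t, rfl⟩ w
      rw [hK (ℓ t) m hm, hK w m hm, hmem0 t]
      omega
  intro m hm
  rcases lt_trichotomy m 0 with hneg | rfl | hpos
  · have hflip : ∀ v : W, Γ.dist v (α ^ m • v) = Γ.dist v (α ^ (-m) • v) := by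
      intro v
      have h1 := hdsm (α ^ (-m)) v (α ^ m • v)
      rw [← h1, ← mul_smul, ← zpow_add, neg_add_cancel, zpow_zero, one_smul,
        SimpleGraph.dist_comm]
    have h2 := hMS (-m).toNat (by omega)
    rw [show (((-m).toNat : ℤ)) = -m from by omega] at h2
    rw [← h2]
    ext v
    simp only [Set.mem_setOf_eq]
    constructor
    · intro h w; rw [← hflip v, ← hflip w]; exact h w
    · intro h w; rw [hflip v, hflip w]; exact h w
  · exact absurd rfl hm
  · have h2 := hMS m.toNat (by omega)
    rwa [show ((m.toNat : ℤ)) = m from by omega] at h2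
theorem stmt9 {V V' : Type} (T : SimpleGraph V) (T' : SimpleGraph V')
    (hT : T.IsTree) (hT' : T'.IsTree)
    (G G' : Type) [Group G] [Group G'] [MulAction G V] [MulAction G' V']
    -- the actions are by graph automorphisms
    (hact : ∀ (g : G) (u v : V), T.Adj u v → T.Adj (g • u) (g • v))
    (hact' : ∀ (g : G') (u v : V'), T'.Adj u v → T'.Adj (g • u) (g • v))
    -- the action of `G'` on `T'` is without inversions
    (hnoinv : ∀ (g : G') (u v : V'), T'.Adj u v → ¬(g • u = v ∧ g • v = u))
    -- vertex stabilizers of the `G`-action are infinite cyclic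
    (hvstab : ∀ v : V, IsCyclic ↥(MulAction.stabilizer G v) ∧
      Infinite ↥(MulAction.stabilizer G v))
    -- edge stabilizers of the `G`-action are infinite cyclic
    (hestab : ∀ u v : V, T.Adj u v →
      IsCyclic ↥(MulAction.stabilizer G u ⊓ MulAction.stabilizer G v) ∧
        Infinite ↥(MulAction.stabilizer G u ⊓ MulAction.stabilizer G v))
    -- stabilizers of the `G'`-action are cyclic
    (hvstab' : ∀ v : V', IsCyclic ↥(MulAction.stabilizer G' v))
    (f : G →* G') (a : G)
    -- `a` is elliptic in `T`
    (ha : ∃ v : V, a • v = v)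
    -- `f a` is hyperbolic in `T'`
    (hhyp : ∀ v : V', f a • v ≠ v) :
    -- the image `f(G)` stabilizes a line in `T'`, invariant under every `f g`
    ∃ ℓ : ℤ → V', Function.Injective ℓ ∧ (∀ i : ℤ, T'.Adj (ℓ i) (ℓ (i + 1))) ∧
      (∀ g : G, (fun x : V' => f g • x) '' Set.range ℓ = Set.range ℓ) := by
  have hc' := hT'.isConnected
  haveI : Nonempty V' := hc'.nonempty
  have ha1 : a ≠ 1 := by
    rintro rfl
    exact hhyp (Classical.arbitrary V') (by simp)
  obtain ⟨v₁, hv₁⟩ := ha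
  obtain ⟨ℓ, hinj, hadj, hMS⟩ := st9_axis hT' hact' hnoinv (f a) hhyp
  refine ⟨ℓ, hinj, hadj, ?_⟩
  intro g
  -- commensurability of elliptic elements in `G`
  have key : ∀ (u w : V) (wk : T.Walk u w) (x y : G),
      x ∈ MulAction.stabilizer G u → y ∈ MulAction.stabilizer G w → x ≠ 1 → y ≠ 1 →
      ∃ m n : ℤ, m ≠ 0 ∧ n ≠ 0 ∧ x ^ m = y ^ n := by
    intro u w wk
    induction wk with
    | nil =>
      intro x y hx hy hx1 hy1
      exact st9_comm_pow _ (hvstab _).1 (hvstab _).2 hx hy hx1 hy1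
    | @cons u b w hadj' wk ih =>
      intro x y hx hy hx1 hy1
      obtain ⟨hKc, hKinf⟩ := hestab u b hadj'
      haveI := hKinf
      obtain ⟨t0, ht0⟩ := exists_ne (1 : ↥(MulAction.stabilizer G u ⊓ MulAction.stabilizer G b))
      have htK := t0.2
      have ht1 : (t0 : G) ≠ 1 := by
        simpa [← Subtype.ext_iff] using ht0
      obtain ⟨m1, n1, hm1, hn1, he1⟩ := st9_comm_pow _ (hvstab u).1 (hvstab u).2 hx
        (inf_le_left (a := MulAction.stabilizer G u) (b := MulAction.stabilizer G b) htK)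
        hx1 ht1
      obtain ⟨m2, n2, hm2, hn2, he2⟩ := ih (t0 : G) y
        (inf_le_right (a := MulAction.stabilizer G u) (b := MulAction.stabilizer G b) htK)
        hy ht1 hy1
      refine ⟨m1 * m2, n2 * n1, mul_ne_zero hm1 hm2, mul_ne_zero hn2 hn1, ?_⟩
      rw [zpow_mul, he1, ← zpow_mul, mul_comm n1 m2, zpow_mul, he2, ← zpow_mul]
  have hya : g * a * g⁻¹ ∈ MulAction.stabilizer G (g • v₁) := by
    rw [MulAction.mem_stabilizer_iff, mul_smul, mul_smul, inv_smul_smul, hv₁]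
  have hconj1 : g * a * g⁻¹ ≠ 1 := by
    intro h
    apply ha1
    have h2 : a = g⁻¹ * (g * a * g⁻¹) * g := by group
    rw [h] at h2
    simpa using h2
  obtain ⟨wk⟩ := hT.isConnected.preconnected v₁ (g • v₁)
  obtain ⟨m, n, hm, hn, hmn⟩ := key v₁ (g • v₁) wk a (g * a * g⁻¹)
    (MulAction.mem_stabilizer_iff.mpr hv₁) hya ha1 hconj1
  have hfa : (f a) ^ m = (f g) * (f a) ^ n * (f g)⁻¹ := by
    have h1 := congrArg f hmn
    rw [map_zpow, map_zpow, map_mul, map_mul, map_inv, conj_zpow] at h1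
    exact h1
  have hdsm := fun (g0 : G') (u v : V') => st9_dist_smul hc' hact' g0 u v
  have e1 := hMS m hm
  have e2 := hMS n hn
  have hpt : ∀ x : V', T'.dist x ((f a) ^ m • x)
      = T'.dist ((f g)⁻¹ • x) ((f a) ^ n • ((f g)⁻¹ • x)) := by
    intro x
    rw [hfa]
    have h1 := hdsm ((f g)⁻¹) x ((f g * (f a) ^ n * (f g)⁻¹) • x)
    rw [← h1]
    congr 1
    rw [← mul_smul, ← mul_smul]
    congr 1
    group
  have e3 : {v : V' | ∀ w, T'.dist v ((f a) ^ m • v) ≤ T'.dist w ((f a) ^ m • w)}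
      = (fun x : V' => f g • x) '' {v : V' | ∀ w, T'.dist v ((f a) ^ n • v) ≤ T'.dist w ((f a) ^ n • w)} := by
    ext v
    simp only [Set.mem_setOf_eq, Set.mem_image]
    constructor
    · intro hv
      refine ⟨(f g)⁻¹ • v, ?_, by simp⟩
      intro w
      have h1 := hv (f g • w)
      rw [hpt v, hpt (f g • w)] at h1
      rwa [inv_smul_smul] at h1
    · rintro ⟨x, hx, rfl⟩ w
      rw [hpt (f g • x), hpt w]
      rw [inv_smul_smul]
      exact hx ((f g)⁻¹ • w)
  calc (fun x : V' => f g • x) '' Set.range ℓ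
      = (fun x : V' => f g • x) ''
        {v : V' | ∀ w, T'.dist v ((f a) ^ n • v) ≤ T'.dist w ((f a) ^ n • w)} := by rw [e2]
    _ = {v : V' | ∀ w, T'.dist v ((f a) ^ m • v) ≤ T'.dist w ((f a) ^ m • w)} := e3.symm
    _ = Set.range ℓ := e1
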